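/- Let t : ℝ → ℝ ∪ {∞} be a proper convex function and α ∈ (α₋, α₊) where α₋ = inf{-t⁻(x) : x ∈ Int(dom t)} and α₊ = sup{-t⁺(x) : x ∈ Int(dom t)}. Then there exist x₁ > x₂ in Int(dom t) with -t⁻(x₁) < α < -t⁺(x₂); in particular -α belongs to the subdifferential ∂t(x) for some x ∈ Int(dom t), and hence -t*(-α) = t(x) + αx is finite. -/

import Mathlib

open Filter Topology

/-- The effective domain of an `EReal`-valued function on `ℝ`. -/
def edom (g : ℝ → EReal) : Set ℝ := {x | g x ≠ ⊤}

/-- Convexity for `EReal`-valued functions on `ℝ`. -/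
def Cvx (g : ℝ → EReal) : Prop :=
  ∀ x y a b : ℝ, 0 ≤ a → 0 ≤ b → a + b = 1 →
    g (a * x + b * y) ≤ (a : EReal) * g x + (b : EReal) * g y

/-- The Legendre conjugate `g*(α) = sup_x (α x - g x)` of an `EReal`-valued function. -/
noncomputable def conjE (g : ℝ → EReal) (α : ℝ) : EReal :=
  ⨆ x : ℝ, ((α * x : ℝ) : EReal) - g x

/-- The left derivative `g⁻(x)`, as the supremum of slopes from the left. -/
noncomputable def leftD (g : ℝ → EReal) (x : ℝ) : ℝ :=
  sSup {r : ℝ | ∃ y < x, ((r * (x - y) : ℝ) : EReal) ≤ g x - g y}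

/-- The right derivative `g⁺(x)`, as the infimum of slopes from the right. -/
noncomputable def rightD (g : ℝ → EReal) (x : ℝ) : ℝ :=
  sInf {r : ℝ | ∃ y > x, g y - g x ≤ ((r * (y - x) : ℝ) : EReal)}



lemma ereal_real {e : EReal} (h1 : e ≠ ⊤) (h2 : ⊥ < e) : ∃ r : ℝ, e = (r : EReal) := by
  induction e with
  | bot => exact absurd h2 (lt_irrefl _)
  | coe r => exact ⟨r, rfl⟩
  | top => exact absurd rfl h1

lemma cvx_le {t : ℝ → EReal} (hconv : ∀ x y a b : ℝ, 0 ≤ a → 0 ≤ b → a + b = 1 →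
      t (a * x + b * y) ≤ (a : EReal) * t x + (b : EReal) * t y)
    {x y p q a b : ℝ} (hx : t x = (p : EReal)) (hy : t y = (q : EReal))
    (ha : 0 ≤ a) (hb : 0 ≤ b) (hab : a + b = 1) :
    t (a * x + b * y) ≤ ((a * p + b * q : ℝ) : EReal) := by
  have := hconv x y a b ha hb hab
  rw [hx, hy] at this
  calc t (a*x+b*y) ≤ (a : EReal) * (p:EReal) + (b:EReal) * (q:EReal) := this
    _ = ((a * p + b * q : ℝ) : EReal) := by
        rw [← EReal.coe_mul, ← EReal.coe_mul, ← EReal.coe_add]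

lemma three_pt {t : ℝ → EReal} (hconv : ∀ x y a b : ℝ, 0 ≤ a → 0 ≤ b → a + b = 1 →
      t (a * x + b * y) ≤ (a : EReal) * t x + (b : EReal) * t y)
    {x y z p q s : ℝ} (hxy : x < y) (hyz : y < z)
    (hx : t x = (p : EReal)) (hy : t y = (q : EReal)) (hz : t z = (s : EReal)) :
    q * (z - x) ≤ p * (z - y) + s * (y - x) := by
  have hzx : (0:ℝ) < z - x := by linarith
  have hne : z - x ≠ 0 := ne_of_gt hzx
  have ha : 0 ≤ (z - y) / (z - x) := div_nonneg (by linarith) hzx.le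
  have hb : 0 ≤ (y - x) / (z - x) := div_nonneg (by linarith) hzx.le
  have hab : (z - y) / (z - x) + (y - x) / (z - x) = 1 := by field_simp; ring
  have hmid : (z - y) / (z - x) * x + (y - x) / (z - x) * z = y := by field_simp; ring
  have h := cvx_le hconv hx hz ha hb hab
  rw [hmid, hy, EReal.coe_le_coe_iff] at h
  have h2 := mul_le_mul_of_nonneg_right h hzx.le
  have he : ((z - y) / (z - x) * p + (y - x) / (z - x) * s) * (z - x)
      = p * (z - y) + s * (y - x) := by field_simp
  linarith [he ▸ h2]

lemma slope3 {t : ℝ → EReal} (hconv : ∀ x y a b : ℝ, 0 ≤ a → 0 ≤ b → a + b = 1 →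
      t (a * x + b * y) ≤ (a : EReal) * t x + (b : EReal) * t y)
    {x y z p q s : ℝ} (hxy : x < y) (hyz : y < z)
    (hx : t x = (p : EReal)) (hy : t y = (q : EReal)) (hz : t z = (s : EReal)) :
    (q - p) / (y - x) ≤ (s - q) / (z - y) := by
  have h := three_pt hconv hxy hyz hx hy hz
  rw [div_le_div_iff₀ (by linarith) (by linarith)]
  nlinarith

lemma slope_mono {t : ℝ → EReal} (hconv : ∀ x y a b : ℝ, 0 ≤ a → 0 ≤ b → a + b = 1 →
      t (a * x + b * y) ≤ (a : EReal) * t x + (b : EReal) * t y)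
    {a b c d pa pb pc pd : ℝ} (hab : a < b) (hbc : b ≤ c) (hcd : c < d)
    (ha : t a = (pa : EReal)) (hb : t b = (pb : EReal))
    (hc : t c = (pc : EReal)) (hd : t d = (pd : EReal)) :
    (pb - pa) / (b - a) ≤ (pd - pc) / (d - c) := by
  rcases eq_or_lt_of_le hbc with h | h
  · subst h
    have hpq : pb = pc := by
      rw [hb] at hc; exact_mod_cast hc
    subst hpq
    exact slope3 hconv hab hcd ha hb hd
  · exact (slope3 hconv hab h ha hb hc).trans (slope3 hconv h hcd hb hc hd)

/-- For a proper convex function `t : ℝ → ℝ ∪ {∞}` and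
`α ∈ (α₋, α₊)`, where `α₋ = inf {-t⁻(x) : x ∈ Int(dom t)}` and
`α₊ = sup {-t⁺(x) : x ∈ Int(dom t)}`, there exist `x₁ > x₂` in `Int(dom t)` with
`-t⁻(x₁) < α < -t⁺(x₂)`; in particular `-α ∈ ∂t(x)` for some `x ∈ Int(dom t)`,
and hence `-t*(-α) = t(x) + α x` is finite. -/
theorem subgradient_attained_of_mem_Ioo (t : ℝ → EReal) (hconv : Cvx t)
    (hbot : ∀ x, ⊥ < t x) (hfin : ∃ x, t x ≠ ⊤) (α : ℝ)
    (hlow : (⨅ x ∈ interior (edom t), ((-leftD t x : ℝ) : EReal)) < (α : EReal))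
    (hup : (α : EReal) < ⨆ x ∈ interior (edom t), ((-rightD t x : ℝ) : EReal)) :
    (∃ x₁ ∈ interior (edom t), ∃ x₂ ∈ interior (edom t),
        x₂ < x₁ ∧ -leftD t x₁ < α ∧ α < -rightD t x₂) ∧
    ∃ x ∈ interior (edom t),
      (∀ x' : ℝ, (((-α) * (x' - x) : ℝ) : EReal) ≤ t x' - t x) ∧
      -conjE t (-α) = t x + ((α * x : ℝ) : EReal) ∧
      ∃ r : ℝ, conjE t (-α) = (r : EReal) := by
  have hcv : ∀ x y a b : ℝ, 0 ≤ a → 0 ≤ b → a + b = 1 →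
      t (a * x + b * y) ≤ (a : EReal) * t x + (b : EReal) * t y := hconv
  set I := interior (edom t) with hI
  have hIsub : I ⊆ edom t := interior_subset
  have treal : ∀ x ∈ edom t, ∃ r : ℝ, t x = (r : EReal) := fun x hx =>
    ereal_real hx (hbot x)
  -- extract x₁ and x₂
  simp only [iInf_lt_iff] at hlow
  obtain ⟨x₁, hx₁I, hx₁⟩ := hlow
  simp only [lt_iSup_iff] at hup
  obtain ⟨x₂, hx₂I, hx₂⟩ := hup
  rw [EReal.coe_lt_coe_iff] at hx₁ hx₂
  obtain ⟨p₁, htx₁⟩ := treal x₁ (hIsub hx₁I)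
  obtain ⟨p₂, htx₂⟩ := treal x₂ (hIsub hx₂I)
  -- nearby points in I
  obtain ⟨ε₁, hε₁, hball₁⟩ := Metric.isOpen_iff.1 isOpen_interior x₁ hx₁I
  obtain ⟨ε₂, hε₂, hball₂⟩ := Metric.isOpen_iff.1 isOpen_interior x₂ hx₂I
  have hyI : x₁ - ε₁ / 2 ∈ I := by
    apply hball₁
    rw [Metric.mem_ball, Real.dist_eq, show x₁ - ε₁ / 2 - x₁ = -(ε₁ / 2) by ring,
      abs_neg, abs_of_nonneg (by linarith)]
    linarith
  have hzI : x₂ + ε₂ / 2 ∈ I := by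
    apply hball₂
    rw [Metric.mem_ball, Real.dist_eq, show x₂ + ε₂ / 2 - x₂ = ε₂ / 2 by ring,
      abs_of_nonneg (by linarith)]
    linarith
  obtain ⟨py, hty⟩ := treal _ (hIsub hyI)
  obtain ⟨pz, htz⟩ := treal _ (hIsub hzI)
  -- the leftD set at x₁ is nonempty
  have hLne : {r : ℝ | ∃ y < x₁, ((r * (x₁ - y) : ℝ) : EReal) ≤ t x₁ - t y}.Nonempty := by
    refine ⟨(p₁ - py) / (ε₁ / 2), x₁ - ε₁ / 2, by linarith, ?_⟩
    rw [htx₁, hty, ← EReal.coe_sub, EReal.coe_le_coe_iff,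
      show x₁ - (x₁ - ε₁ / 2) = ε₁ / 2 by ring, div_mul_cancel₀ _ (by positivity)]
  -- the rightD set at x₂ is nonempty
  have hRne : {r : ℝ | ∃ y > x₂, t y - t x₂ ≤ ((r * (y - x₂) : ℝ) : EReal)}.Nonempty := by
    refine ⟨(pz - p₂) / (ε₂ / 2), x₂ + ε₂ / 2, by linarith, ?_⟩
    rw [htx₂, htz, ← EReal.coe_sub, EReal.coe_le_coe_iff,
      show x₂ + ε₂ / 2 - x₂ = ε₂ / 2 by ring, div_mul_cancel₀ _ (by positivity)]
  -- witness for leftD t x₁ > -α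
  obtain ⟨r, ⟨y, hylt, hyr⟩, hrα⟩ :=
    exists_lt_of_lt_csSup (s := {r : ℝ | ∃ y < x₁, ((r * (x₁ - y) : ℝ) : EReal) ≤ t x₁ - t y}) hLne (show -α < leftD t x₁ from by linarith)
  have htyne : t y ≠ ⊤ := by
    intro h
    rw [htx₁, h, EReal.sub_top, le_bot_iff] at hyr
    exact EReal.coe_ne_bot _ hyr
  obtain ⟨qy, htqy⟩ := treal y htyne
  rw [htx₁, htqy, ← EReal.coe_sub, EReal.coe_le_coe_iff] at hyr
  -- witness for rightD t x₂ < -α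
  obtain ⟨sr, ⟨z, hzgt, hzs⟩, hsα⟩ :=
    exists_lt_of_csInf_lt hRne (show rightD t x₂ < -α from by linarith)
  have htzne : t z ≠ ⊤ := by
    intro h
    rw [htx₂, h, EReal.top_sub_coe, top_le_iff] at hzs
    exact EReal.coe_ne_top _ hzs
  obtain ⟨qz, htqz⟩ := treal z htzne
  rw [htx₂, htqz, ← EReal.coe_sub, EReal.coe_le_coe_iff] at hzs
  -- x₂ < x₁
  have hx21 : x₂ < x₁ := by
    by_contra h
    push_neg at h
    have hs1 : r ≤ (p₁ - qy) / (x₁ - y) := (le_div_iff₀ (by linarith)).2 hyr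
    have hs2 : (qz - p₂) / (z - x₂) ≤ sr := (div_le_iff₀ (by linarith)).2 hzs
    have := slope_mono hcv hylt h hzgt htqy htx₁ htx₂ htqz
    linarith
  -- convexity of edom and I
  have hdomcvx : Convex ℝ (edom t) := by
    intro u hu v hv a b ha hb hab
    obtain ⟨pu, hpu⟩ := treal u hu
    obtain ⟨pv, hpv⟩ := treal v hv
    have := cvx_le hcv hpu hpv ha hb hab
    simp only [smul_eq_mul]
    intro htop
    rw [htop, top_le_iff] at this
    exact EReal.coe_ne_top _ this
  have hIcvx : Convex ℝ I := hdomcvx.interior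
  have hIccI : Set.Icc x₂ x₁ ⊆ I := hIcvx.ordConnected.out hx₂I hx₁I
  -- the real-valued restriction
  set f : ℝ → ℝ := fun u => (t u).toReal with hf
  have hfeq : ∀ u ∈ edom t, t u = ((f u : ℝ) : EReal) := by
    intro u hu
    obtain ⟨pu, hpu⟩ := treal u hu
    rw [hpu]; simp [hf, hpu]
  have hfconv : ConvexOn ℝ I f := by
    refine ⟨hIcvx, fun u hu v hv a b ha hb hab => ?_⟩
    simp only [smul_eq_mul]
    have hmem : a * u + b * v ∈ I := by
      have := hIcvx hu hv ha hb hab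
      simpa only [smul_eq_mul] using this
    have h := cvx_le hcv (hfeq u (hIsub hu)) (hfeq v (hIsub hv)) ha hb hab
    rw [hfeq _ (hIsub hmem), EReal.coe_le_coe_iff] at h
    exact h
  -- minimize g = f + α * id on [x₂, x₁]
  set g : ℝ → ℝ := fun u => f u + α * u with hg
  have hgcont : ContinuousOn g (Set.Icc x₂ x₁) := by
    apply ContinuousOn.add ((hfconv.continuousOn isOpen_interior).mono hIccI)
    exact (continuous_const.mul continuous_id).continuousOn
  obtain ⟨x, hxmem, hxmin⟩ := isCompact_Icc.exists_isMinOn ⟨x₂, le_refl _, hx21.le⟩ hgcont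
  have hxmin' : ∀ u ∈ Set.Icc x₂ x₁, g x ≤ g u := fun u hu => hxmin hu
  -- values of f on I
  have hfx₁ : f x₁ = p₁ := by rw [hf]; simp [htx₁]
  have hfx₂ : f x₂ = p₂ := by rw [hf]; simp [htx₂]
  have hgdef : ∀ u, g u = f u + α * u := fun u => rfl
  -- strict decrease from x₂ rightwards: g at z is below g x₂
  have hgz : qz + α * z < p₂ + α * x₂ := by
    have : qz - p₂ < -α * (z - x₂) := lt_of_le_of_lt hzs (by nlinarith)
    linarith
  -- strict decrease from x₁ leftwards: g at y is below g x₁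
  have hgy : qy + α * y < p₁ + α * x₁ := by
    have : -α * (x₁ - y) < p₁ - qy := lt_of_lt_of_le (by nlinarith) hyr
    linarith
  have hgx₁def : g x₁ = p₁ + α * x₁ := by rw [hgdef, hfx₁]
  have hgx₂def : g x₂ = p₂ + α * x₂ := by rw [hgdef, hfx₂]
  -- the minimum is strictly below the value at x₂
  have hgx2 : g x < p₂ + α * x₂ := by
    rcases le_or_gt z x₁ with hzle | hzgt'
    · have hfz : f z = qz := by rw [hf]; simp [htqz]
      calc g x ≤ g z := hxmin' z ⟨hzgt.le, hzle⟩
        _ = qz + α * z := by rw [hgdef, hfz]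
        _ < p₂ + α * x₂ := hgz
    · have h3 := three_pt hcv hx21 hzgt' htx₂ htx₁ htqz
      have hgx1lt : p₁ + α * x₁ < p₂ + α * x₂ := by
        nlinarith [mul_lt_mul_of_pos_right hgz (show (0:ℝ) < x₁ - x₂ by linarith)]
      calc g x ≤ g x₁ := hxmin' x₁ ⟨hx21.le, le_refl _⟩
        _ = p₁ + α * x₁ := hgx₁def
        _ < p₂ + α * x₂ := hgx1lt
  -- the minimum is strictly below the value at x₁
  have hgx1 : g x < p₁ + α * x₁ := by
    rcases le_or_gt x₂ y with hyge | hylt2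
    · have hfy : f y = qy := by rw [hf]; simp [htqy]
      calc g x ≤ g y := hxmin' y ⟨hyge, hylt.le⟩
        _ = qy + α * y := by rw [hgdef, hfy]
        _ < p₁ + α * x₁ := hgy
    · have h3 := three_pt hcv hylt2 hx21 htqy htx₂ htx₁
      have hgx2lt : p₂ + α * x₂ < p₁ + α * x₁ := by
        nlinarith [mul_lt_mul_of_pos_right hgy (show (0:ℝ) < x₁ - x₂ by linarith)]
      calc g x ≤ g x₂ := hxmin' x₂ ⟨le_refl _, hx21.le⟩
        _ = p₂ + α * x₂ := hgx₂def
        _ < p₁ + α * x₁ := hgx2lt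
  -- x is in the open interval, hence in I
  have hx2lt : x₂ < x :=
    lt_of_le_of_ne hxmem.1 fun h => by
      rw [← h, hgx₂def] at hgx2; exact lt_irrefl _ hgx2
  have hxlt1 : x < x₁ :=
    lt_of_le_of_ne hxmem.2 fun h => by
      rw [h, hgx₁def] at hgx1; exact lt_irrefl _ hgx1
  have hxI : x ∈ I := hIccI hxmem
  have htx : t x = ((f x : ℝ) : EReal) := hfeq x (hIsub hxI)
  -- the key global minimality property
  have key : ∀ x' q : ℝ, t x' = (q : EReal) → f x + α * x ≤ q + α * x' := by
    intro x' q htq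
    by_contra hcon
    push_neg at hcon
    rcases le_or_gt x' x₁ with h1 | h1
    · rcases le_or_gt x₂ x' with h2 | h2
      · have hfx' : f x' = q := by rw [hf]; simp [htq]
        have := hxmin' x' ⟨h2, h1⟩
        rw [hgdef, hgdef, hfx'] at this
        linarith
      · -- x' < x₂ < x
        have h3 := three_pt hcv h2 hx2lt htq htx₂ htx
        have hmin2 := hxmin' x₂ ⟨le_refl _, hx21.le⟩
        rw [hgdef, hgdef, hfx₂] at hmin2
        nlinarith [mul_lt_mul_of_pos_right hcon (show (0:ℝ) < x - x₂ by linarith)]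
    · -- x < x₁ < x'
      have h3 := three_pt hcv hxlt1 h1 htx htx₁ htq
      have hmin1 := hxmin' x₁ ⟨hx21.le, le_refl _⟩
      rw [hgdef, hgdef, hfx₁] at hmin1
      nlinarith [mul_lt_mul_of_pos_right hcon (show (0:ℝ) < x₁ - x by linarith)]
  -- subgradient property
  have subgrad : ∀ x' : ℝ, ((-α * (x' - x) : ℝ) : EReal) ≤ t x' - t x := by
    intro x'
    by_cases h : t x' = ⊤
    · rw [h, htx, EReal.top_sub_coe]; exact le_top
    · obtain ⟨q, htq⟩ := treal x' h
      rw [htq, htx, ← EReal.coe_sub, EReal.coe_le_coe_iff]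
      have := key x' q htq
      linarith
  -- the conjugate value
  have hconj : conjE t (-α) = ((-α * x - f x : ℝ) : EReal) := by
    apply le_antisymm
    · apply iSup_le
      intro x'
      by_cases h : t x' = ⊤
      · rw [h, EReal.sub_top]; exact bot_le
      · obtain ⟨q, htq⟩ := treal x' h
        rw [htq, ← EReal.coe_sub, EReal.coe_le_coe_iff]
        have := key x' q htq
        linarith
    · have hle := le_iSup (fun x' => ((-α * x' : ℝ) : EReal) - t x') x
      rw [htx, ← EReal.coe_sub] at hle
      exact hle
  refine ⟨⟨x₁, hx₁I, x₂, hx₂I, hx21, hx₁, hx₂⟩, x, hxI, subgrad, ?_, ⟨-α * x - f x, hconj⟩⟩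
  rw [hconj, htx, ← EReal.coe_neg, ← EReal.coe_add]
  congr 1
  ring
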